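/- arXiv:2205.05579 — 2 statements merged into one kernel-verified Lean document; each statement's English description precedes it below -/
import Mathlib

section
/- Let ρ be Dickman's function. For all real x with 2 < x ≤ 3, ρ(x) = 1 − π²/12 − log x + (1/2)·(log x)² + Li₂(1/x). -/
open Real

/-- The dilogarithm Li₂(y) = ∑_{n=1}^∞ yⁿ/n². -/
noncomputable def Li2 (y : ℝ) : ℝ := ∑' n : ℕ, y ^ (n + 1) / ((n : ℝ) + 1) ^ 2

lemma hasSum_inv_sq_succ : HasSum (fun n : ℕ => 1 / ((n:ℝ)+1)^2) (π^2/6) := by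
  have h := hasSum_zeta_two
  have h2 := (hasSum_nat_add_iff' (f := fun n : ℕ => (1:ℝ)/(n:ℝ)^2) 1).mpr h
  simp only [Finset.range_one, Finset.sum_singleton, Nat.cast_zero] at h2
  norm_num at h2
  convert h2 using 2 with n
  case e'_3 => rfl
  rw [one_div]

lemma li2_one : Li2 1 = π^2/6 := by
  have := hasSum_inv_sq_succ.tsum_eq
  simpa [Li2] using this

lemma li2_zero : Li2 0 = 0 := by
  simp [Li2]

lemma summable_inv_sq_succ : Summable (fun n : ℕ => 1 / ((n:ℝ)+1)^2) :=
  hasSum_inv_sq_succ.summable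

lemma li2_continuousOn : ContinuousOn Li2 (Set.Icc (-1:ℝ) 1) := by
  apply continuousOn_tsum (u := fun n : ℕ => 1 / ((n:ℝ)+1)^2)
    (fun i => (continuous_pow (i+1)).continuousOn.div_const _) summable_inv_sq_succ
  intro n y hy
  have hy1 : |y| ≤ 1 := abs_le.mpr ⟨hy.1, hy.2⟩
  rw [norm_div, norm_pow]
  have h1 : ‖y‖ ^ (n+1) ≤ 1 := pow_le_one₀ (norm_nonneg _) hy1
  have h2 : (0:ℝ) < ((n:ℝ)+1)^2 := by positivity
  rw [Real.norm_eq_abs (((n:ℝ)+1)^2), abs_of_pos h2]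
  gcongr

lemma li2_hasDerivAt {y : ℝ} (h0 : 0 < y) (h1 : y < 1) :
    HasDerivAt Li2 (-Real.log (1 - y) / y) y := by
  set r : ℝ := (1 + y) / 2 with hr
  have hr1 : r < 1 := by rw [hr]; linarith
  have hyr : y < r := by rw [hr]; linarith
  have hr0 : 0 < r := by rw [hr]; linarith
  have key : HasDerivAt (fun z : ℝ => ∑' n : ℕ, z ^ (n + 1) / ((n : ℝ) + 1) ^ 2)
      (∑' n : ℕ, y ^ n / ((n : ℝ) + 1)) y := by
    apply hasDerivAt_tsum_of_isPreconnected (u := fun n : ℕ => r ^ n)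
      (t := Set.Ioo (-r) r) (y₀ := 0)
      (g' := fun (n : ℕ) (z : ℝ) => z ^ n / ((n : ℝ) + 1))
      (summable_geometric_of_lt_one hr0.le hr1) isOpen_Ioo
      (convex_Ioo _ _).isPreconnected
    · intro n z _
      have h := (hasDerivAt_pow (n + 1) z).div_const (((n : ℝ) + 1) ^ 2)
      convert h using 1
      case e'_4 => rfl
      have hn : ((n : ℝ) + 1) ≠ 0 := by positivity
      push_cast
      field_simp
    · intro n z hz
      have hz1 : |z| ≤ r := by
        rw [abs_le]; exact ⟨hz.1.le, hz.2.le⟩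
      rw [norm_div, norm_pow, Real.norm_eq_abs, Real.norm_eq_abs]
      have hd : (1:ℝ) ≤ |(n : ℝ) + 1| := by
        rw [abs_of_pos (by positivity)]; simp
      calc |z| ^ n / |(n : ℝ) + 1| ≤ |z| ^ n / 1 := by
            gcongr
        _ = |z| ^ n := by rw [div_one]
        _ ≤ r ^ n := pow_le_pow_left₀ (abs_nonneg _) hz1 n
    · exact Set.mem_Ioo.mpr ⟨by linarith, hr0⟩
    · simpa using summable_zero
    · exact Set.mem_Ioo.mpr ⟨by linarith, hyr⟩
  have hsum : HasSum (fun n : ℕ => y ^ n / ((n : ℝ) + 1)) (-Real.log (1 - y) / y) := by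
    have h := Real.hasSum_pow_div_log_of_abs_lt_one (x := y) (by rw [abs_of_pos h0]; exact h1)
    have h2 := h.div_const y
    convert h2 using 2 with n
    case e'_3 => rfl
    rw [pow_succ]
    field_simp
  rw [← hsum.tsum_eq]
  exact key

lemma li2_half : Li2 (1/2) = π^2/12 - (Real.log 2)^2/2 := by
  set G : ℝ → ℝ := fun y => Li2 y + Li2 (1 - y) + Real.log y * Real.log (1 - y) with hG
  -- G is constant on [1/2, 1)
  have hGderiv : ∀ z : ℝ, 0 < z → z < 1 → HasDerivAt G 0 z := by
    intro z hz0 hz1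
    have h1 : HasDerivAt Li2 (-Real.log (1 - z) / z) z := li2_hasDerivAt hz0 hz1
    have hsub : HasDerivAt (fun w : ℝ => 1 - w) (-1) z := by
      simpa using (hasDerivAt_id z).const_sub 1
    have h2 : HasDerivAt (fun w : ℝ => Li2 (1 - w))
        ((-Real.log (1 - (1 - z)) / (1 - z)) * (-1)) z :=
      (li2_hasDerivAt (by linarith) (by linarith)).comp z hsub
    have h3 : HasDerivAt (fun w : ℝ => Real.log w) (1 / z) z := by
      simpa [one_div] using Real.hasDerivAt_log (ne_of_gt hz0)
    have h4 : HasDerivAt (fun w : ℝ => Real.log (1 - w)) ((1 / (1 - z)) * (-1)) z := by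
      have := (Real.hasDerivAt_log (x := 1 - z) (by linarith)).comp z hsub
      simpa [one_div, Function.comp_def] using this
    have h5 := (h3.mul h4)
    have htot := (h1.add h2).add h5
    convert htot using 1
    case e'_4 => rfl
    case e'_5 => rfl
    case e'_8 => rfl
    rw [sub_sub_cancel]
    field_simp
    ring
  have hconst : ∀ y : ℝ, 1/2 ≤ y → y < 1 → G y = G (1/2) := by
    intro y hy hy1
    have := constant_of_has_deriv_right_zero (f := G) (a := 1/2) (b := y)
      (fun z hz => by
        have hz0 : 0 < z := lt_of_lt_of_le (by norm_num) hz.1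
        have hz1 : z < 1 := lt_of_le_of_lt hz.2 hy1
        exact ((hGderiv z hz0 hz1).continuousAt).continuousWithinAt)
      (fun z hz => by
        have hz0 : 0 < z := lt_of_lt_of_le (by norm_num) hz.1
        have hz1 : z < 1 := hz.2.trans hy1
        exact (hGderiv z hz0 hz1).hasDerivWithinAt)
    exact this y (Set.mem_Icc.mpr ⟨hy, le_refl y⟩)
  -- limit of G as y → 1⁻ along Ioo (1/2) 1
  set l : Filter ℝ := nhdsWithin 1 (Set.Ioo (1/2 : ℝ) 1) with hl
  have hlne : l.NeBot := by
    apply mem_closure_iff_nhdsWithin_neBot.mp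
    have : (1:ℝ) ∈ closure (Set.Ioo (1/2 : ℝ) 1) := by
      rw [closure_Ioo (by norm_num : (1:ℝ)/2 ≠ 1)]
      exact Set.mem_Icc.mpr ⟨by norm_num, le_refl 1⟩
    exact this
  have hmem : ∀ᶠ y in l, y ∈ Set.Ioo (1/2 : ℝ) 1 := eventually_mem_nhdsWithin
  -- Tendsto Li2 l (𝓝 (Li2 1))
  have t1 : Filter.Tendsto Li2 l (nhds (Li2 1)) := by
    have hc : ContinuousWithinAt Li2 (Set.Icc (-1:ℝ) 1) 1 :=
      li2_continuousOn 1 (Set.mem_Icc.mpr ⟨by norm_num, le_refl 1⟩)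
    apply hc.tendsto.mono_left
    apply nhdsWithin_mono
    intro y hy
    exact Set.mem_Icc.mpr ⟨by linarith [hy.1], hy.2.le⟩
  have t2 : Filter.Tendsto (fun y => Li2 (1 - y)) l (nhds (Li2 0)) := by
    have hc : ContinuousWithinAt Li2 (Set.Icc (-1:ℝ) 1) 0 :=
      li2_continuousOn 0 (Set.mem_Icc.mpr ⟨by norm_num, by norm_num⟩)
    apply hc.tendsto.comp
    rw [tendsto_nhdsWithin_iff]
    constructor
    · have : Filter.Tendsto (fun y : ℝ => 1 - y) (nhds 1) (nhds (1 - 1)) :=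
        (tendsto_const_nhds.sub Filter.tendsto_id)
      simpa using this.mono_left nhdsWithin_le_nhds
    · filter_upwards [hmem] with y hy
      exact Set.mem_Icc.mpr ⟨by linarith [hy.2], by linarith [hy.1]⟩
  have t3 : Filter.Tendsto (fun y => Real.log y * Real.log (1 - y)) l (nhds 0) := by
    have hbound : ∀ᶠ y in l, ‖Real.log y * Real.log (1 - y)‖ ≤
        2 * |(1 - y) * Real.log (1 - y)| := by
      filter_upwards [hmem] with y hy
      have hy0 : (0:ℝ) < y := by linarith [hy.1]
      have hy1 : y < 1 := hy.2
      have hlogy : |Real.log y| ≤ 2 * (1 - y) := by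
        have hneg : Real.log y ≤ 0 := Real.log_nonpos hy0.le hy1.le
        rw [abs_of_nonpos hneg]
        have : Real.log y = -Real.log (1/y) := by
          rw [Real.log_div one_ne_zero (ne_of_gt hy0), Real.log_one]; ring
        rw [this, neg_neg]
        have h2 : Real.log (1/y) ≤ 1/y - 1 := Real.log_le_sub_one_of_pos (by positivity)
        have h3 : 1/y - 1 ≤ 2 * (1 - y) := by
          rw [div_sub_one (ne_of_gt hy0), div_le_iff₀ hy0]
          nlinarith [hy.1, hy.2]
        linarith
      calc ‖Real.log y * Real.log (1 - y)‖ = |Real.log y| * |Real.log (1 - y)| := by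
            rw [Real.norm_eq_abs, abs_mul]
        _ ≤ (2 * (1 - y)) * |Real.log (1 - y)| := by
            apply mul_le_mul_of_nonneg_right hlogy (abs_nonneg _)
        _ = 2 * |(1 - y) * Real.log (1 - y)| := by
            rw [abs_mul, abs_of_nonneg (by linarith : (0:ℝ) ≤ 1 - y)]; ring
    have hb : Filter.Tendsto (fun y : ℝ => 2 * |(1 - y) * Real.log (1 - y)|) l (nhds 0) := by
      have hc : Continuous (fun y : ℝ => 2 * |(1 - y) * Real.log (1 - y)|) := by
        have h0 : Continuous (fun y : ℝ => (1 - y) * Real.log (1 - y)) :=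
          Real.continuous_mul_log.comp ((continuous_const.sub continuous_id : Continuous fun y : ℝ => 1 - y))
        exact continuous_const.mul h0.abs
      have := hc.tendsto 1
      simp only [sub_self, zero_mul, Real.log_zero, mul_zero, abs_zero] at this
      exact this.mono_left nhdsWithin_le_nhds
    exact squeeze_zero_norm' hbound hb
  have tG : Filter.Tendsto G l (nhds (π^2/6)) := by
    have := (t1.add t2).add t3
    rw [li2_one, li2_zero] at this
    simpa [hG] using this
  have tGc : Filter.Tendsto G l (nhds (G (1/2))) := by
    apply Filter.Tendsto.congr' _ tendsto_const_nhds
    filter_upwards [hmem] with y hy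
    exact (hconst y hy.1.le hy.2).symm
  have hval : G (1/2) = π^2/6 := tendsto_nhds_unique tGc tG
  rw [hG] at hval
  simp only at hval
  have : (1:ℝ) - 1/2 = 1/2 := by norm_num
  rw [this] at hval
  have hlog : Real.log (1/2) = -Real.log 2 := by
    rw [Real.log_div one_ne_zero two_ne_zero, Real.log_one]; ring
  rw [hlog] at hval
  nlinarith [hval]

/-- Dickman's function satisfies
ρ(x) = 1 − π²/12 − log x + (1/2)(log x)² + Li₂(1/x) for 2 < x ≤ 3. -/
theorem dickman_on_two_three
    (ρ : ℝ → ℝ)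
    (hρ_neg : ∀ x < (0 : ℝ), ρ x = 0)
    (hρ_init : ∀ x : ℝ, 0 ≤ x → x ≤ 1 → ρ x = 1)
    (hρ_cont : ContinuousOn ρ (Set.Ici 0))
    (hρ_dde : ∀ x : ℝ, 1 < x → HasDerivAt ρ (-(ρ (x - 1)) / x) x) :
    ∀ x : ℝ, 2 < x → x ≤ 3 →
      ρ x = 1 - π ^ 2 / 12 - Real.log x + (1 / 2) * (Real.log x) ^ 2 + Li2 (1 / x) := by
  -- Step 1: ρ = 1 - log on [1,2]
  have step1 : ∀ x : ℝ, 1 ≤ x → x ≤ 2 → ρ x = 1 - Real.log x := by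
    intro x hx1 hx2
    rcases eq_or_lt_of_le hx1 with h | h
    · rw [← h, Real.log_one, hρ_init 1 zero_le_one le_rfl]; ring
    · -- for a ∈ (1, x): ρ x + log x = ρ a + log a
      have key : ∀ a ∈ Set.Ioo (1:ℝ) x, ρ x + Real.log x = ρ a + Real.log a := by
        intro a ha
        have const := constant_of_has_deriv_right_zero
          (f := fun t => ρ t + Real.log t) (a := a) (b := x)
          (by
            apply ContinuousOn.add
            · exact hρ_cont.mono (fun t ht => le_trans (by linarith [ha.1] : (0:ℝ) ≤ a) ht.1)
            · apply ContinuousOn.log continuousOn_id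
              intro t ht
              have h1t : (1:ℝ) < t := lt_of_lt_of_le ha.1 ht.1
              exact ne_of_gt (by simp only [id_eq]; linarith)
          )
          (fun t ht => by
            have ht1 : 1 < t := lt_of_lt_of_le ha.1 ht.1
            have ht0 : t ≠ 0 := ne_of_gt (by linarith)
            have hd := (hρ_dde t ht1).add (Real.hasDerivAt_log ht0)
            have hval : ρ (t - 1) = 1 := hρ_init (t - 1) (by linarith) (by
              have := ht.2; linarith)
            rw [hval] at hd
            have : -(1:ℝ) / t + t⁻¹ = 0 := by field_simp; ring
            rw [this] at hd
            exact hd.hasDerivWithinAt)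
        exact const x (Set.mem_Icc.mpr ⟨ha.2.le, le_rfl⟩)
      -- take limit a → 1⁺
      set l : Filter ℝ := nhdsWithin 1 (Set.Ioo (1:ℝ) x) with hl
      have hlne : l.NeBot := by
        apply mem_closure_iff_nhdsWithin_neBot.mp
        rw [closure_Ioo (ne_of_lt h)]
        exact Set.mem_Icc.mpr ⟨le_rfl, h.le⟩
      have hmem : ∀ᶠ a in l, a ∈ Set.Ioo (1:ℝ) x := eventually_mem_nhdsWithin
      have t1 : Filter.Tendsto (fun a => ρ a + Real.log a) l (nhds (ρ 1 + Real.log 1)) := by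
        apply Filter.Tendsto.add
        · have hc : ContinuousWithinAt ρ (Set.Ici (0:ℝ)) 1 := hρ_cont 1 (by norm_num)
          exact hc.tendsto.mono_left (nhdsWithin_mono _ (fun a ha => le_trans zero_le_one ha.1.le))
        · exact ((Real.continuousAt_log one_ne_zero).tendsto).mono_left nhdsWithin_le_nhds
      have t2 : Filter.Tendsto (fun a => ρ a + Real.log a) l (nhds (ρ x + Real.log x)) := by
        apply Filter.Tendsto.congr' _ tendsto_const_nhds
        filter_upwards [hmem] with a ha
        exact key a ha
      have := tendsto_nhds_unique t2 t1
      rw [hρ_init 1 zero_le_one le_rfl, Real.log_one] at this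
      linarith
  -- Step 2
  intro x hx2 hx3
  set F : ℝ → ℝ := fun t => 1 - π ^ 2 / 12 - Real.log t + (1 / 2) * (Real.log t) ^ 2
      + Li2 (1 / t) with hF
  have hFderiv : ∀ t : ℝ, 2 ≤ t → t ≤ 3 → HasDerivAt F (-(1 - Real.log (t - 1)) / t) t := by
    intro t ht2 ht3
    have ht0 : (0:ℝ) < t := by linarith
    have htne : t ≠ 0 := ne_of_gt ht0
    have hy0 : (0:ℝ) < 1 / t := by positivity
    have hy1 : 1 / t < 1 := by rw [div_lt_one ht0]; linarith
    have hinv : HasDerivAt (fun t : ℝ => 1 / t) (-(1 / t ^ 2)) t := by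
      simpa [one_div] using hasDerivAt_inv htne
    have hLi : HasDerivAt (fun t : ℝ => Li2 (1 / t))
        ((-Real.log (1 - 1 / t) / (1 / t)) * (-(1 / t ^ 2))) t :=
      (li2_hasDerivAt hy0 hy1).comp t hinv
    have hlog : HasDerivAt (fun t : ℝ => Real.log t) (1 / t) t := by
      simpa [one_div] using Real.hasDerivAt_log htne
    have hsq : HasDerivAt (fun t : ℝ => (1/2 : ℝ) * (Real.log t) ^ 2)
        ((1/2 : ℝ) * ((2 : ℕ) * (Real.log t) ^ 1 * (1 / t))) t :=
      (hlog.pow 2).const_mul (1/2 : ℝ)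
    have htot := (((hasDerivAt_const t (1 - π ^ 2 / 12 : ℝ)).sub hlog).add hsq).add hLi
    convert htot using 1
    case e'_4 => rfl
    case e'_5 => rfl
    case e'_8 => rfl
    have h1t : 1 - 1 / t = (t - 1) / t := by field_simp
    rw [h1t, Real.log_div (by linarith : t - (1:ℝ) ≠ 0) htne]
    push_cast
    field_simp
    ring
  have hρto : ∀ t ∈ Set.Ico (2:ℝ) x, HasDerivWithinAt ρ (-(1 - Real.log (t - 1)) / t)
      (Set.Ici t) t := by
    intro t ht
    have ht1 : (1:ℝ) < t := by linarith [ht.1]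
    have hd := hρ_dde t ht1
    have hval : ρ (t - 1) = 1 - Real.log (t - 1) :=
      step1 (t - 1) (by linarith [ht.1]) (by linarith [ht.2, hx3])
    rw [hval] at hd
    exact hd.hasDerivWithinAt
  have hFto : ∀ t ∈ Set.Ico (2:ℝ) x, HasDerivWithinAt F (-(1 - Real.log (t - 1)) / t)
      (Set.Ici t) t :=
    fun t ht => (hFderiv t ht.1 (by linarith [ht.2, hx3])).hasDerivWithinAt
  have hρcont : ContinuousOn ρ (Set.Icc 2 x) :=
    hρ_cont.mono (fun t ht => le_trans (by norm_num) ht.1)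
  have hFcont : ContinuousOn F (Set.Icc 2 x) := fun t ht =>
    ((hFderiv t ht.1 (le_trans ht.2 hx3)).continuousAt).continuousWithinAt
  have hinit : ρ 2 = F 2 := by
    rw [step1 2 (by norm_num) le_rfl, hF]
    simp only
    rw [li2_half]
    ring
  have := eq_of_has_deriv_right_eq hρto hFto hρcont hFcont hinit
  exact this x (Set.mem_Icc.mpr ⟨hx2.le, le_rfl⟩)
end

section
/- Let σ be Watterson's function, and assume 0 ≤ σ(ξ) ≤ ξ^{−1/2} for all ξ > 0. Then for every real η > 0, the one-sided Laplace transform ∫₀^∞ e^{−ηξ}·σ(ξ) dξ equals √(π/η)·exp(−E(η)/2), where E(η) = ∫_η^∞ e^{−t}/t dt is the exponential integral. -/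
open Real MeasureTheory Set Filter Topology

/-- The exponential integral E(x) = ∫ₓ^∞ e^{−t}/t dt. -/
noncomputable def expInt (x : ℝ) : ℝ := ∫ t in Set.Ioi x, Real.exp (-t) / t

lemma exp_neg_intOn {a : ℝ} : IntegrableOn (fun t : ℝ => Real.exp (-t)) (Set.Ioi a) := by
  have := exp_neg_integrableOn_Ioi a one_pos
  simpa using this

lemma expInt_integrand_intOn {a : ℝ} (ha : 0 < a) :
    IntegrableOn (fun t : ℝ => Real.exp (-t) / t) (Set.Ioi a) := by
  refine Integrable.mono (exp_neg_intOn.const_mul a⁻¹) ?_ ?_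
  · refine (ContinuousOn.aestronglyMeasurable ?_ measurableSet_Ioi)
    exact (continuous_neg.rexp.continuousOn).div continuousOn_id
      (fun t ht => (ha.trans ht).ne')
  · filter_upwards [ae_restrict_mem measurableSet_Ioi] with t ht
    have ht0 : 0 < t := ha.trans ht
    rw [Real.norm_eq_abs, Real.norm_eq_abs, abs_of_nonneg (by positivity),
      abs_of_nonneg (by positivity)]
    rw [div_eq_inv_mul]
    exact mul_le_mul_of_nonneg_right (by exact inv_anti₀ ha ht.le) (Real.exp_nonneg _)

lemma expInt_split {a y : ℝ} (ha : 0 < a) (hay : a ≤ y) :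
    expInt y = expInt a - ∫ t in a..y, Real.exp (-t) / t := by
  have h1 : Set.Ioc a y ∪ Set.Ioi y = Set.Ioi a := Set.Ioc_union_Ioi_eq_Ioi hay
  have hint := expInt_integrand_intOn ha
  have h2 : expInt a = (∫ t in Set.Ioc a y, Real.exp (-t) / t) + expInt y := by
    rw [expInt, expInt, ← h1, setIntegral_union (Set.Ioc_disjoint_Ioi le_rfl)
      measurableSet_Ioi (hint.mono_set (h1 ▸ Set.subset_union_left))
      (hint.mono_set (h1 ▸ Set.subset_union_right))]
  rw [intervalIntegral.integral_of_le hay]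
  linarith [h2]

lemma expInt_hasDerivAt {x : ℝ} (hx : 0 < x) :
    HasDerivAt expInt (-(Real.exp (-x) / x)) x := by
  set a := x / 2 with ha_def
  have ha : 0 < a := by positivity
  have hax : a < x := by simp [ha_def]; linarith
  have hint : IntegrableOn (fun t : ℝ => Real.exp (-t) / t) (Set.Ioi a) :=
    expInt_integrand_intOn ha
  have hD : HasDerivAt (fun y => ∫ t in a..y, Real.exp (-t) / t) (Real.exp (-x) / x) x := by
    refine intervalIntegral.integral_hasDerivAt_right
      ((intervalIntegrable_iff_integrableOn_Ioc_of_le (le_of_lt hax)).2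
        (hint.mono_set Set.Ioc_subset_Ioi_self))
      ⟨Set.Ioi a, Ioi_mem_nhds hax, hint.aestronglyMeasurable⟩
      ((Real.continuous_exp.comp continuous_neg).continuousAt.div
        continuousAt_id hx.ne')
  have hEq : (fun y => expInt a - ∫ t in a..y, Real.exp (-t) / t) =ᶠ[𝓝 x] expInt := by
    filter_upwards [Ioi_mem_nhds hax] with y hy
    rw [expInt_split ha (le_of_lt hy)]
  exact (((hasDerivAt_const x (expInt a)).sub hD).congr_of_eventuallyEq hEq.symm).congr_deriv
    (by ring)

lemma expInt_nonneg {x : ℝ} (hx : 0 < x) : 0 ≤ expInt x := by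
  refine setIntegral_nonneg measurableSet_Ioi fun t ht => ?_
  have : 0 < t := hx.trans ht
  positivity

lemma expInt_le {x : ℝ} (hx : 0 < x) : expInt x ≤ Real.exp (-x) / x := by
  have h1 : expInt x ≤ ∫ t in Set.Ioi x, x⁻¹ * Real.exp (-t) := by
    refine setIntegral_mono_on (expInt_integrand_intOn hx)
      (exp_neg_intOn.const_mul x⁻¹) measurableSet_Ioi fun t ht => ?_
    have ht0 : 0 < t := hx.trans ht
    rw [div_eq_inv_mul]
    exact mul_le_mul_of_nonneg_right (inv_anti₀ hx ht.le) (Real.exp_nonneg _)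
  rw [integral_const_mul, integral_exp_neg_Ioi] at h1
  rw [div_eq_inv_mul]; exact h1

lemma expInt_tendsto_zero : Tendsto expInt atTop (𝓝 0) := by
  have h := squeeze_zero' (g := fun x => Real.exp (-x) / x)
    (eventually_atTop.2 ⟨1, fun x hx => expInt_nonneg (by linarith)⟩)
    (eventually_atTop.2 ⟨1, fun x hx => expInt_le (by linarith)⟩) ?_
  · exact h
  · have : Tendsto (fun x : ℝ => Real.exp (-x) / x) atTop (𝓝 0) :=
      Tendsto.div_atTop Real.tendsto_exp_neg_atTop_nhds_zero tendsto_id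
    exact this

lemma gamma_weight_intOn {η s : ℝ} (hη : 0 < η) (hs : 0 < s) :
    IntegrableOn (fun ξ : ℝ => Real.exp (-η * ξ) * ξ ^ (s - 1)) (Set.Ioi 0) := by
  have h := Real.GammaIntegral_convergent hs
  have h2 : IntegrableOn (fun ξ : ℝ => Real.exp (-(η * ξ)) * (η * ξ) ^ (s - 1))
      (Set.Ioi 0) := by
    have := (integrableOn_Ioi_comp_mul_left_iff
      (fun x : ℝ => Real.exp (-x) * x ^ (s - 1)) 0 hη).2 (by simpa using h)
    simpa using this
  have h3 : IntegrableOn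
      (fun ξ : ℝ => η ^ (1 - s) * (Real.exp (-(η * ξ)) * (η * ξ) ^ (s - 1)))
      (Set.Ioi 0) := h2.const_mul _
  refine h3.congr_fun ?_ measurableSet_Ioi
  intro ξ hξ
  have hξ0 : (0 : ℝ) < ξ := hξ
  have hone : η ^ (1 - s) * η ^ (s - 1) = 1 := by
    rw [← Real.rpow_add hη]; norm_num
  simp only [Real.mul_rpow hη.le hξ0.le, neg_mul]
  linear_combination (Real.exp (-(η * ξ)) * ξ ^ (s - 1)) * hone

lemma sigma_intOn (σ : ℝ → ℝ) (hσ_cont : ContinuousOn σ (Set.Ioi 0))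
    (hσ_bdd : ∀ ξ : ℝ, 0 < ξ → 0 ≤ σ ξ ∧ σ ξ ≤ 1 / Real.sqrt ξ)
    {η p : ℝ} (hη : 0 < η) (hp : 0 ≤ p) :
    IntegrableOn (fun ξ : ℝ => ξ ^ p * (Real.exp (-η * ξ) * σ ξ)) (Set.Ioi 0) := by
  have hg := gamma_weight_intOn hη (show (0:ℝ) < p + 1/2 by linarith)
  refine Integrable.mono hg ?_ ?_
  · have hσm : AEStronglyMeasurable σ (volume.restrict (Set.Ioi 0)) :=
      hσ_cont.aestronglyMeasurable measurableSet_Ioi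
    have hc : Continuous fun ξ : ℝ => Real.exp (-η * ξ) :=
      (continuous_const.mul continuous_id).rexp
    exact (((continuousOn_id.rpow_const fun x hx => Or.inl (ne_of_gt hx)).aestronglyMeasurable
      measurableSet_Ioi).mul (hc.aestronglyMeasurable.restrict.mul hσm))
  · filter_upwards [ae_restrict_mem measurableSet_Ioi] with ξ hξ
    have hξ0 : (0 : ℝ) < ξ := hξ
    obtain ⟨h0, h1⟩ := hσ_bdd ξ hξ0
    have hE : (0:ℝ) < Real.exp (-η * ξ) := Real.exp_pos _
    have hsb : σ ξ ≤ ξ ^ (-(1/2) : ℝ) := by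
      rw [Real.rpow_neg hξ0.le, ← Real.sqrt_eq_rpow, ← one_div]
      exact h1
    rw [Real.norm_eq_abs, Real.norm_eq_abs,
      abs_of_nonneg (by positivity), abs_of_nonneg (by positivity)]
    calc ξ ^ p * (Real.exp (-η * ξ) * σ ξ)
        ≤ ξ ^ p * (Real.exp (-η * ξ) * ξ ^ (-(1/2) : ℝ)) := by gcongr
      _ = Real.exp (-η * ξ) * ξ ^ (p + 1/2 - 1) := by
          rw [show p + 1/2 - 1 = p + -(1/2) by ring, Real.rpow_add hξ0]; ring

lemma sigma_intOn0 (σ : ℝ → ℝ) (hσ_cont : ContinuousOn σ (Set.Ioi 0))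
    (hσ_bdd : ∀ ξ : ℝ, 0 < ξ → 0 ≤ σ ξ ∧ σ ξ ≤ 1 / Real.sqrt ξ)
    {η : ℝ} (hη : 0 < η) :
    IntegrableOn (fun ξ : ℝ => Real.exp (-η * ξ) * σ ξ) (Set.Ioi 0) := by
  refine (sigma_intOn σ hσ_cont hσ_bdd hη le_rfl).congr_fun ?_ measurableSet_Ioi
  intro ξ hξ
  simp only [Real.rpow_zero, one_mul]

lemma sigma_intOn1 (σ : ℝ → ℝ) (hσ_cont : ContinuousOn σ (Set.Ioi 0))
    (hσ_bdd : ∀ ξ : ℝ, 0 < ξ → 0 ≤ σ ξ ∧ σ ξ ≤ 1 / Real.sqrt ξ)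
    {η : ℝ} (hη : 0 < η) :
    IntegrableOn (fun ξ : ℝ => ξ * (Real.exp (-η * ξ) * σ ξ)) (Set.Ioi 0) := by
  refine (sigma_intOn σ hσ_cont hσ_bdd hη zero_le_one).congr_fun ?_ measurableSet_Ioi
  intro ξ hξ
  simp only [Real.rpow_one]

lemma sigma_shift_int (σ : ℝ → ℝ)
    (hσ_nonpos : ∀ x ≤ (0 : ℝ), σ x = 0)
    (hσ_cont : ContinuousOn σ (Set.Ioi 0))
    (hσ_bdd : ∀ ξ : ℝ, 0 < ξ → 0 ≤ σ ξ ∧ σ ξ ≤ 1 / Real.sqrt ξ)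
    {η : ℝ} (hη : 0 < η) :
    IntegrableOn (fun ξ : ℝ => Real.exp (-η * ξ) * σ (ξ - 1)) (Set.Ioi 0) ∧
    (∫ ξ in Set.Ioi (0:ℝ), Real.exp (-η * ξ) * σ (ξ - 1)) =
      Real.exp (-η) * ∫ ξ in Set.Ioi (0:ℝ), Real.exp (-η * ξ) * σ ξ := by
  set f : ℝ → ℝ := fun ξ => Real.exp (-η * ξ) * σ ξ with hf_def
  have hsupp : Function.support f ⊆ Set.Ioi 0 := by
    intro x hx
    by_contra hx0
    simp only [Set.mem_Ioi, not_lt] at hx0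
    exact hx (by simp [hf_def, hσ_nonpos x hx0])
  have hfint : Integrable f :=
    (integrableOn_iff_integrable_of_support_subset hsupp).1
      (sigma_intOn0 σ hσ_cont hσ_bdd hη)
  set g : ℝ → ℝ := fun u => Real.exp (-η * (u + 1)) * σ u with hg_def
  have hgf : ∀ u, g u = Real.exp (-η) * f u := by
    intro u
    simp only [hg_def, hf_def, ← Real.exp_add]
    ring_nf
    rw [show -η - η * u = -(η * u) + -η by ring, Real.exp_add]
    ring
  have hgint : Integrable g := by
    refine (hfint.const_mul (Real.exp (-η))).congr ?_
    exact ae_of_all _ fun u => (hgf u).symm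
  have hcomp : ∀ ξ : ℝ, Real.exp (-η * ξ) * σ (ξ - 1) = g (ξ - 1) := by
    intro ξ; simp [hg_def]
  have hint2 : Integrable (fun ξ : ℝ => Real.exp (-η * ξ) * σ (ξ - 1)) := by
    have := hgint.comp_sub_right 1
    refine this.congr (ae_of_all _ fun ξ => ?_)
    exact (hcomp ξ).symm
  refine ⟨hint2.integrableOn, ?_⟩
  have hzero : ∀ x, x ∉ Set.Ioi (0:ℝ) → Real.exp (-η * x) * σ (x - 1) = 0 := by
    intro x hx
    simp only [Set.mem_Ioi, not_lt] at hx
    rw [hσ_nonpos (x - 1) (by linarith), mul_zero]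
  rw [setIntegral_eq_integral_of_forall_compl_eq_zero hzero]
  have : (∫ ξ : ℝ, Real.exp (-η * ξ) * σ (ξ - 1)) = ∫ ξ : ℝ, g (ξ - 1) := by
    congr 1; ext ξ; exact hcomp ξ
  rw [this, integral_sub_right_eq_self g 1]
  have : (∫ u : ℝ, g u) = Real.exp (-η) * ∫ u : ℝ, f u := by
    rw [← integral_const_mul]
    congr 1; ext u; exact hgf u
  rw [this, setIntegral_eq_integral_of_forall_compl_eq_zero
    (fun x hx => by
      simp only [Set.mem_Ioi, not_lt] at hx
      simp [hf_def, hσ_nonpos x hx])]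

lemma parts_identity (σ : ℝ → ℝ)
    (hσ_nonpos : ∀ x ≤ (0 : ℝ), σ x = 0)
    (hσ_init : ∀ x : ℝ, 0 < x → x ≤ 1 → σ x = 1 / Real.sqrt x)
    (hσ_cont : ContinuousOn σ (Set.Ioi 0))
    (hσ_dde : ∀ x : ℝ, 1 < x → HasDerivAt σ (-(σ x / 2 + σ (x - 1) / 2) / x) x)
    (hσ_bdd : ∀ ξ : ℝ, 0 < ξ → 0 ≤ σ ξ ∧ σ ξ ≤ 1 / Real.sqrt ξ)
    {η : ℝ} (hη : 0 < η) :
    η * (∫ ξ in Set.Ioi (0:ℝ), ξ * (Real.exp (-η * ξ) * σ ξ)) =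
      (1 - Real.exp (-η)) / 2 * ∫ ξ in Set.Ioi (0:ℝ), Real.exp (-η * ξ) * σ ξ := by
  set φ : ℝ → ℝ := fun ξ => Real.exp (-η * ξ) * (ξ * σ ξ) with hφ_def
  set ψ : ℝ → ℝ :=
    fun ξ => Real.exp (-η * ξ) * (σ ξ / 2 - σ (ξ - 1) / 2 - η * (ξ * σ ξ)) with hψ_def
  have hexp : ∀ ξ : ℝ, HasDerivAt (fun x : ℝ => Real.exp (-η * x))
      (-η * Real.exp (-η * ξ)) ξ := by
    intro ξ
    simpa [mul_comm] using (((hasDerivAt_id ξ).const_mul (-η)).exp)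
  -- derivative on (1, ∞)
  have hderiv_gt : ∀ ξ ∈ Set.Ioi (1:ℝ), HasDerivAt φ (ψ ξ) ξ := by
    intro ξ hξ
    have hξ1 : (1:ℝ) < ξ := hξ
    have hξ0 : (0:ℝ) < ξ := by linarith
    have h1 : HasDerivAt (fun x : ℝ => x * σ x) (σ ξ / 2 - σ (ξ - 1) / 2) ξ := by
      have h := (hasDerivAt_id ξ).mul (hσ_dde ξ hξ1)
      refine h.congr_deriv ?_
      field_simp
      simp only [id]
      ring
    have h2 := (hexp ξ).mul h1
    refine h2.congr_deriv ?_
    simp only [hψ_def]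
    ring
  -- derivative on (0, 1)
  have hφψ2 : Set.EqOn φ (fun ξ => Real.exp (-η * ξ) * Real.sqrt ξ) (Set.Icc 0 1) := by
    intro ξ hξ
    rcases eq_or_lt_of_le hξ.1 with h | h
    · simp [hφ_def, ← h]
    · simp only [hφ_def, hσ_init ξ h hξ.2]
      rw [show ξ * (1 / Real.sqrt ξ) = ξ / Real.sqrt ξ by ring, Real.div_sqrt]
  have hcont01 : ContinuousOn φ (Set.Icc 0 1) := by
    refine ContinuousOn.congr ?_ hφψ2
    exact (((continuous_const.mul continuous_id).rexp).mul Real.continuous_sqrt).continuousOn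
  have hD01 : ∀ ξ ∈ Set.Ioo (0:ℝ) 1, HasDerivWithinAt φ (ψ ξ) (Set.Ioi ξ) ξ := by
    intro ξ hξ
    have hξ0 : (0:ℝ) < ξ := hξ.1
    have hsq : (0:ℝ) < Real.sqrt ξ := Real.sqrt_pos.2 hξ0
    have hd2 : HasDerivAt (fun x => Real.exp (-η * x) * Real.sqrt x)
        (-η * Real.exp (-η * ξ) * Real.sqrt ξ + Real.exp (-η * ξ) * (1 / (2 * Real.sqrt ξ))) ξ :=
      (hexp ξ).mul (Real.hasDerivAt_sqrt hξ0.ne')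
    have hev : (fun x => Real.exp (-η * x) * Real.sqrt x) =ᶠ[𝓝 ξ] φ := by
      filter_upwards [Ioo_mem_nhds hξ.1 hξ.2] with x hx
      exact (hφψ2 ⟨hx.1.le, hx.2.le⟩).symm
    have hD := hd2.congr_of_eventuallyEq hev.symm
    have hval : ψ ξ = -η * Real.exp (-η * ξ) * Real.sqrt ξ +
        Real.exp (-η * ξ) * (1 / (2 * Real.sqrt ξ)) := by
      simp only [hψ_def, hσ_init ξ hξ0 hξ.2.le, hσ_nonpos (ξ - 1) (by linarith [hξ.2])]
      rw [show ξ * (1 / Real.sqrt ξ) = ξ / Real.sqrt ξ by ring, Real.div_sqrt]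
      field_simp
      ring
    rw [hval]
    exact hD.hasDerivWithinAt
  -- continuity at 1 from the right
  have hφcont : ContinuousOn φ (Set.Ioi 0) := by
    exact ((continuous_const.mul continuous_id).rexp).continuousOn.mul
      (continuousOn_id.mul hσ_cont)
  -- tail tendsto 0
  have htail : Tendsto φ atTop (𝓝 0) := by
    apply squeeze_zero_norm' (a := fun ξ => ξ ^ ((1:ℝ)/2) * Real.exp (-η * ξ))
    · filter_upwards [eventually_gt_atTop (0:ℝ)] with ξ hξ
      obtain ⟨h0, h1⟩ := hσ_bdd ξ hξ
      have : |φ ξ| = Real.exp (-η * ξ) * (ξ * σ ξ) := by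
        rw [hφ_def, abs_of_nonneg (by positivity)]
      rw [Real.norm_eq_abs, this]
      have hb : ξ * σ ξ ≤ Real.sqrt ξ := by
        calc ξ * σ ξ ≤ ξ * (1 / Real.sqrt ξ) := by gcongr
          _ = ξ / Real.sqrt ξ := by ring
          _ = Real.sqrt ξ := Real.div_sqrt
      calc Real.exp (-η * ξ) * (ξ * σ ξ) ≤ Real.exp (-η * ξ) * Real.sqrt ξ := by gcongr
        _ = ξ ^ ((1:ℝ)/2) * Real.exp (-η * ξ) := by
            rw [Real.sqrt_eq_rpow]; ring
    · have := tendsto_rpow_mul_exp_neg_mul_atTop_nhds_zero ((1:ℝ)/2) η hη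
      refine this.congr fun ξ => ?_
      rw [neg_mul]
  -- integrability of ψ
  have hψint : IntegrableOn ψ (Set.Ioi 0) := by
    have h1 := (sigma_intOn0 σ hσ_cont hσ_bdd hη).const_mul (1/2 : ℝ)
    have h2 := (sigma_shift_int σ hσ_nonpos hσ_cont hσ_bdd hη).1.const_mul (1/2 : ℝ)
    have h3 := (sigma_intOn1 σ hσ_cont hσ_bdd hη).const_mul η
    have h4 : IntegrableOn (fun ξ : ℝ =>
        1/2 * (Real.exp (-η * ξ) * σ ξ) - 1/2 * (Real.exp (-η * ξ) * σ (ξ - 1))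
          - η * (ξ * (Real.exp (-η * ξ) * σ ξ))) (Set.Ioi 0) := (h1.sub h2).sub h3
    refine h4.congr_fun (fun ξ _ => ?_) measurableSet_Ioi
    simp only [hψ_def]
    ring
  -- FTC on (0, 1]
  have eq1 : ∫ x in (0:ℝ)..1, ψ x = φ 1 - φ 0 := by
    refine intervalIntegral.integral_eq_sub_of_hasDeriv_right ?_ ?_ ?_
    · rwa [Set.uIcc_of_le zero_le_one]
    · intro x hx
      rw [min_def, max_def] at hx
      norm_num at hx
      exact hD01 x ⟨hx.1, hx.2⟩
    · exact (intervalIntegrable_iff_integrableOn_Ioc_of_le zero_le_one).2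
        (hψint.mono_set Set.Ioc_subset_Ioi_self)
  -- FTC on (1, ∞)
  have eq2 : ∫ ξ in Set.Ioi (1:ℝ), ψ ξ = 0 - φ 1 := by
    refine integral_Ioi_of_hasDerivAt_of_tendsto ?_ hderiv_gt
      (hψint.mono_set (Set.Ioi_subset_Ioi zero_le_one)) htail
    exact (hφcont.continuousWithinAt (by norm_num : (1:ℝ) ∈ Set.Ioi 0)).mono
      (fun x hx => Set.mem_Ioi.2 (lt_of_lt_of_le one_pos hx))
  have hφ0 : φ 0 = 0 := by simp [hφ_def]
  -- total integral of ψ is 0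
  have eqtot : ∫ ξ in Set.Ioi (0:ℝ), ψ ξ = 0 := by
    have hsplit : Set.Ioc (0:ℝ) 1 ∪ Set.Ioi 1 = Set.Ioi 0 :=
      Set.Ioc_union_Ioi_eq_Ioi zero_le_one
    rw [← hsplit, setIntegral_union (Set.Ioc_disjoint_Ioi le_rfl) measurableSet_Ioi
      (hψint.mono_set (hsplit ▸ Set.subset_union_left))
      (hψint.mono_set (hsplit ▸ Set.subset_union_right))]
    rw [← intervalIntegral.integral_of_le zero_le_one, eq1, eq2, hφ0]
    ring
  -- expand the integral of ψ
  have hA : IntegrableOn (fun ξ : ℝ => 1/2 * (Real.exp (-η * ξ) * σ ξ)) (Set.Ioi 0) :=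
    (sigma_intOn0 σ hσ_cont hσ_bdd hη).const_mul _
  have hB : IntegrableOn (fun ξ : ℝ => 1/2 * (Real.exp (-η * ξ) * σ (ξ - 1))) (Set.Ioi 0) :=
    (sigma_shift_int σ hσ_nonpos hσ_cont hσ_bdd hη).1.const_mul _
  have hC : IntegrableOn (fun ξ : ℝ => η * (ξ * (Real.exp (-η * ξ) * σ ξ))) (Set.Ioi 0) :=
    (sigma_intOn1 σ hσ_cont hσ_bdd hη).const_mul _
  have e0 : ∫ ξ in Set.Ioi (0:ℝ), ψ ξ =
      ∫ ξ in Set.Ioi (0:ℝ), (1/2 * (Real.exp (-η * ξ) * σ ξ)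
        - 1/2 * (Real.exp (-η * ξ) * σ (ξ - 1)) - η * (ξ * (Real.exp (-η * ξ) * σ ξ))) :=
    setIntegral_congr_fun measurableSet_Ioi fun ξ _ => by simp only [hψ_def]; ring
  have e1 : ∫ ξ in Set.Ioi (0:ℝ), (1/2 * (Real.exp (-η * ξ) * σ ξ)
        - 1/2 * (Real.exp (-η * ξ) * σ (ξ - 1)) - η * (ξ * (Real.exp (-η * ξ) * σ ξ))) =
      (∫ ξ in Set.Ioi (0:ℝ), (1/2 * (Real.exp (-η * ξ) * σ ξ)
        - 1/2 * (Real.exp (-η * ξ) * σ (ξ - 1))))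
      - ∫ ξ in Set.Ioi (0:ℝ), η * (ξ * (Real.exp (-η * ξ) * σ ξ)) :=
    integral_sub (hA.sub hB) hC
  have e2 : ∫ ξ in Set.Ioi (0:ℝ), (1/2 * (Real.exp (-η * ξ) * σ ξ)
        - 1/2 * (Real.exp (-η * ξ) * σ (ξ - 1))) =
      (∫ ξ in Set.Ioi (0:ℝ), 1/2 * (Real.exp (-η * ξ) * σ ξ))
      - ∫ ξ in Set.Ioi (0:ℝ), 1/2 * (Real.exp (-η * ξ) * σ (ξ - 1)) :=
    integral_sub hA hB
  have hexpand : ∫ ξ in Set.Ioi (0:ℝ), ψ ξ =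
      (1/2) * (∫ ξ in Set.Ioi (0:ℝ), Real.exp (-η * ξ) * σ ξ)
      - (1/2) * (∫ ξ in Set.Ioi (0:ℝ), Real.exp (-η * ξ) * σ (ξ - 1))
      - η * (∫ ξ in Set.Ioi (0:ℝ), ξ * (Real.exp (-η * ξ) * σ ξ)) := by
    rw [e0, e1, e2, integral_const_mul, integral_const_mul, integral_const_mul]
  rw [hexpand, (sigma_shift_int σ hσ_nonpos hσ_cont hσ_bdd hη).2] at eqtot
  linarith [eqtot]

lemma laplace_hasDerivAt (σ : ℝ → ℝ)
    (hσ_cont : ContinuousOn σ (Set.Ioi 0))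
    (hσ_bdd : ∀ ξ : ℝ, 0 < ξ → 0 ≤ σ ξ ∧ σ ξ ≤ 1 / Real.sqrt ξ)
    {η : ℝ} (hη : 0 < η) :
    HasDerivAt (fun x => ∫ ξ in Set.Ioi (0:ℝ), Real.exp (-x * ξ) * σ ξ)
      (-∫ ξ in Set.Ioi (0:ℝ), ξ * (Real.exp (-η * ξ) * σ ξ)) η := by
  have hε : (0:ℝ) < η / 2 := by positivity
  have hbound_int : IntegrableOn
      (fun ξ : ℝ => Real.exp (-(η/2) * ξ) * ξ ^ ((3:ℝ)/2 - 1)) (Set.Ioi 0) :=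
    gamma_weight_intOn hε (by norm_num)
  have hσm : AEStronglyMeasurable σ (volume.restrict (Set.Ioi 0)) :=
    hσ_cont.aestronglyMeasurable measurableSet_Ioi
  have hres := hasDerivAt_integral_of_dominated_loc_of_deriv_le
    (F := fun x ξ => Real.exp (-x * ξ) * σ ξ)
    (F' := fun x ξ => -(ξ * (Real.exp (-x * ξ) * σ ξ)))
    (x₀ := η) (s := Metric.ball η (η/2)) (μ := volume.restrict (Set.Ioi 0))
    (bound := fun ξ => Real.exp (-(η/2) * ξ) * ξ ^ ((3:ℝ)/2 - 1))
    (Metric.ball_mem_nhds η hε) ?_ (sigma_intOn0 σ hσ_cont hσ_bdd hη) ?_ ?_ hbound_int ?_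
  · simpa [integral_neg] using hres.2
  · refine Eventually.of_forall fun x => ?_
    exact ((continuous_const.mul continuous_id).rexp.aestronglyMeasurable.restrict).mul hσm
  · exact ((sigma_intOn1 σ hσ_cont hσ_bdd hη).aestronglyMeasurable).neg
  · filter_upwards [ae_restrict_mem measurableSet_Ioi] with ξ hξ
    intro x hx
    have hξ0 : (0:ℝ) < ξ := hξ
    obtain ⟨h0, h1⟩ := hσ_bdd ξ hξ0
    have hx2 : η/2 ≤ x := by
      have := abs_lt.1 (mem_ball_iff_norm.1 hx)
      linarith [this.1]
    have hee : Real.exp (-x * ξ) ≤ Real.exp (-(η/2) * ξ) := by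
      apply Real.exp_le_exp.2
      nlinarith
    calc ‖-(ξ * (Real.exp (-x * ξ) * σ ξ))‖
        = ξ * (Real.exp (-x * ξ) * σ ξ) := by
          rw [norm_neg, Real.norm_eq_abs, abs_of_nonneg (by positivity)]
      _ ≤ ξ * (Real.exp (-(η/2) * ξ) * (1 / Real.sqrt ξ)) := by gcongr
      _ = Real.exp (-(η/2) * ξ) * (ξ / Real.sqrt ξ) := by ring
      _ = Real.exp (-(η/2) * ξ) * Real.sqrt ξ := by rw [Real.div_sqrt]
      _ = Real.exp (-(η/2) * ξ) * ξ ^ ((3:ℝ)/2 - 1) := by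
          rw [Real.sqrt_eq_rpow]; norm_num
  · filter_upwards [ae_restrict_mem measurableSet_Ioi] with ξ hξ
    intro x hx
    have h1 : HasDerivAt (fun y : ℝ => -y * ξ) (-ξ) x := by
      simpa using ((hasDerivAt_id x).neg.mul_const ξ)
    have h2 := (h1.exp).mul_const (σ ξ)
    refine h2.congr_deriv ?_
    ring

lemma laplace_sqrt_tendsto (σ : ℝ → ℝ)
    (hσ_nonpos : ∀ x ≤ (0 : ℝ), σ x = 0)
    (hσ_init : ∀ x : ℝ, 0 < x → x ≤ 1 → σ x = 1 / Real.sqrt x)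
    (hσ_cont : ContinuousOn σ (Set.Ioi 0))
    (hσ_bdd : ∀ ξ : ℝ, 0 < ξ → 0 ≤ σ ξ ∧ σ ξ ≤ 1 / Real.sqrt ξ) :
    Tendsto (fun η : ℝ => Real.sqrt η * ∫ ξ in Set.Ioi (0:ℝ), Real.exp (-η * ξ) * σ ξ)
      atTop (𝓝 (Real.sqrt π)) := by
  have hexp_half : ((1:ℝ)/2 - 1) = -(1/2) := by norm_num
  have hgint : IntegrableOn (fun u : ℝ => Real.exp (-u) * u ^ (-(1/2) : ℝ)) (Set.Ioi 0) := by
    have h := Real.GammaIntegral_convergent (show (0:ℝ) < 1/2 by norm_num)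
    rw [hexp_half] at h
    exact h
  have hgval : (∫ u in Set.Ioi (0:ℝ), Real.exp (-u) * u ^ (-(1/2) : ℝ)) = Real.sqrt π := by
    have h := Real.Gamma_eq_integral (show (0:ℝ) < 1/2 by norm_num)
    rw [← Real.Gamma_one_half_eq, h, hexp_half]
  -- the transformed first piece
  have key : ∀ η : ℝ, 0 < η →
      Real.sqrt η * (∫ ξ in Set.Ioc (0:ℝ) 1, Real.exp (-η * ξ) * σ ξ) =
        ∫ u in (0:ℝ)..η, Real.exp (-u) * u ^ (-(1/2) : ℝ) := by
    intro η hη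
    have hA : (∫ ξ in Set.Ioc (0:ℝ) 1, Real.exp (-η * ξ) * σ ξ) =
        ∫ x in (0:ℝ)..1, Real.exp (-η * x) * x ^ (-(1/2) : ℝ) := by
      rw [intervalIntegral.integral_of_le zero_le_one]
      refine setIntegral_congr_fun measurableSet_Ioc fun ξ hξ => ?_
      rw [hσ_init ξ hξ.1 hξ.2, Real.rpow_neg (le_of_lt hξ.1), ← Real.sqrt_eq_rpow, one_div]
    have hcomp := intervalIntegral.integral_comp_mul_left
      (a := (0:ℝ)) (b := 1) (c := η)
      (f := fun u => Real.exp (-u) * u ^ (-(1/2) : ℝ)) hη.ne'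
    have hptw : ∫ x in (0:ℝ)..1, Real.exp (-(η * x)) * (η * x) ^ (-(1/2) : ℝ) =
        η ^ (-(1/2) : ℝ) * ∫ x in (0:ℝ)..1, Real.exp (-η * x) * x ^ (-(1/2) : ℝ) := by
      rw [← intervalIntegral.integral_const_mul]
      refine intervalIntegral.integral_congr fun x hx => ?_
      rw [Set.uIcc_of_le zero_le_one] at hx
      rw [Real.mul_rpow hη.le hx.1, neg_mul]
      ring
    rw [hptw] at hcomp
    have hpow : η * η ^ (-(1/2) : ℝ) = Real.sqrt η := by
      rw [Real.sqrt_eq_rpow]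
      nth_rewrite 1 [← Real.rpow_one η]
      rw [← Real.rpow_add hη]
      norm_num
    rw [hA]
    simp only [mul_zero, mul_one, smul_eq_mul] at hcomp
    have heq : (∫ u in (0:ℝ)..η, Real.exp (-u) * u ^ (-(1/2) : ℝ)) =
        η * (η ^ (-(1/2) : ℝ) * ∫ x in (0:ℝ)..1, Real.exp (-η * x) * x ^ (-(1/2) : ℝ)) := by
      rw [hcomp]
      field_simp
    rw [heq, ← mul_assoc, hpow]
  -- first piece tendsto
  have h1 : Tendsto (fun η : ℝ => ∫ u in (0:ℝ)..η, Real.exp (-u) * u ^ (-(1/2) : ℝ))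
      atTop (𝓝 (Real.sqrt π)) := by
    rw [← hgval]
    exact intervalIntegral_tendsto_integral_Ioi 0 hgint tendsto_id
  -- second piece tendsto 0
  have h2 : Tendsto (fun η : ℝ => Real.sqrt η * ∫ ξ in Set.Ioi (1:ℝ), Real.exp (-η * ξ) * σ ξ)
      atTop (𝓝 0) := by
    apply squeeze_zero_norm' (a := fun η : ℝ => Real.exp (-η))
    · filter_upwards [eventually_ge_atTop (1:ℝ)] with η hη1
      have hη : (0:ℝ) < η := by linarith
      have hJ0 : 0 ≤ ∫ ξ in Set.Ioi (1:ℝ), Real.exp (-η * ξ) * σ ξ := by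
        refine setIntegral_nonneg measurableSet_Ioi fun ξ hξ => ?_
        have : (0:ℝ) < ξ := lt_trans one_pos hξ
        exact mul_nonneg (Real.exp_nonneg _) (hσ_bdd ξ this).1
      have hJle : (∫ ξ in Set.Ioi (1:ℝ), Real.exp (-η * ξ) * σ ξ) ≤
          ∫ ξ in Set.Ioi (1:ℝ), Real.exp (-η * ξ) := by
        refine setIntegral_mono_on
          ((sigma_intOn0 σ hσ_cont hσ_bdd hη).mono_set (Set.Ioi_subset_Ioi zero_le_one))
          (by simpa [neg_mul] using exp_neg_integrableOn_Ioi 1 hη)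
          measurableSet_Ioi fun ξ hξ => ?_
        have hξ1 : (1:ℝ) < ξ := hξ
        have hξ0 : (0:ℝ) < ξ := by linarith
        have : σ ξ ≤ 1 := by
          refine le_trans (hσ_bdd ξ hξ0).2 ?_
          rw [div_le_one (Real.sqrt_pos.2 hξ0)]
          exact Real.one_le_sqrt.2 hξ1.le
        calc Real.exp (-η * ξ) * σ ξ ≤ Real.exp (-η * ξ) * 1 := by gcongr
          _ = Real.exp (-η * ξ) := mul_one _
      have hJval : (∫ ξ in Set.Ioi (1:ℝ), Real.exp (-η * ξ)) = η⁻¹ * Real.exp (-η) := by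
        have h := integral_comp_mul_left_Ioi (fun u => Real.exp (-u)) 1 hη
        simp only [smul_eq_mul, mul_one] at h
        have e : (∫ ξ in Set.Ioi (1:ℝ), Real.exp (-η * ξ)) =
            ∫ x in Set.Ioi (1:ℝ), Real.exp (-(η * x)) :=
          setIntegral_congr_fun measurableSet_Ioi fun ξ _ => by rw [neg_mul]
        rw [e, h, integral_exp_neg_Ioi]
      have hsle : Real.sqrt η ≤ η := by
        nlinarith [Real.sq_sqrt hη.le, Real.sqrt_nonneg η]
      rw [Real.norm_eq_abs, abs_of_nonneg (mul_nonneg (Real.sqrt_nonneg _) hJ0)]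
      calc Real.sqrt η * ∫ ξ in Set.Ioi (1:ℝ), Real.exp (-η * ξ) * σ ξ
          ≤ Real.sqrt η * (η⁻¹ * Real.exp (-η)) := by
            rw [← hJval]; gcongr
        _ ≤ η * (η⁻¹ * Real.exp (-η)) := by gcongr
        _ = Real.exp (-η) := by field_simp
    · exact Real.tendsto_exp_neg_atTop_nhds_zero
  have hsplit : ∀ η : ℝ, 0 < η →
      Real.sqrt η * (∫ ξ in Set.Ioi (0:ℝ), Real.exp (-η * ξ) * σ ξ) =
      (∫ u in (0:ℝ)..η, Real.exp (-u) * u ^ (-(1/2) : ℝ))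
        + Real.sqrt η * ∫ ξ in Set.Ioi (1:ℝ), Real.exp (-η * ξ) * σ ξ := by
    intro η hη
    have hu : Set.Ioc (0:ℝ) 1 ∪ Set.Ioi 1 = Set.Ioi 0 := Set.Ioc_union_Ioi_eq_Ioi zero_le_one
    have hint := sigma_intOn0 σ hσ_cont hσ_bdd hη
    rw [← hu, setIntegral_union (Set.Ioc_disjoint_Ioi le_rfl) measurableSet_Ioi
      (hint.mono_set (hu ▸ Set.subset_union_left))
      (hint.mono_set (hu ▸ Set.subset_union_right)), mul_add, key η hη]
  have hsum := h1.add h2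
  rw [add_zero] at hsum
  refine Tendsto.congr' ?_ hsum
  filter_upwards [eventually_gt_atTop (0:ℝ)] with η hη
  exact (hsplit η hη).symm

noncomputable def lapG (σ : ℝ → ℝ) (x : ℝ) : ℝ :=
  (∫ ξ in Set.Ioi (0:ℝ), Real.exp (-x * ξ) * σ ξ) * (Real.sqrt x * Real.exp (expInt x / 2))

lemma lapG_hasDerivAt (σ : ℝ → ℝ)
    (hσ_nonpos : ∀ x ≤ (0 : ℝ), σ x = 0)
    (hσ_init : ∀ x : ℝ, 0 < x → x ≤ 1 → σ x = 1 / Real.sqrt x)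
    (hσ_cont : ContinuousOn σ (Set.Ioi 0))
    (hσ_dde : ∀ x : ℝ, 1 < x → HasDerivAt σ (-(σ x / 2 + σ (x - 1) / 2) / x) x)
    (hσ_bdd : ∀ ξ : ℝ, 0 < ξ → 0 ≤ σ ξ ∧ σ ξ ≤ 1 / Real.sqrt ξ)
    {x : ℝ} (hx : 0 < x) : HasDerivAt (lapG σ) 0 x := by
  have hs0 : 0 < Real.sqrt x := Real.sqrt_pos.2 hx
  have hss : Real.sqrt x * Real.sqrt x = x := Real.mul_self_sqrt hx.le
  have hF' := laplace_hasDerivAt σ hσ_cont hσ_bdd hx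
  have hparts := parts_identity σ hσ_nonpos hσ_init hσ_cont hσ_dde hσ_bdd hx
  have hsq := Real.hasDerivAt_sqrt hx.ne'
  have hEexp := ((expInt_hasDerivAt hx).div_const 2).exp
  have hG' := hF'.mul (hsq.mul hEexp)
  have h0 :
      (-∫ ξ in Set.Ioi (0:ℝ), ξ * (Real.exp (-x * ξ) * σ ξ)) *
          (Real.sqrt x * Real.exp (expInt x / 2)) +
        (∫ ξ in Set.Ioi (0:ℝ), Real.exp (-x * ξ) * σ ξ) *
          (1 / (2 * Real.sqrt x) * Real.exp (expInt x / 2) +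
            Real.sqrt x * (Real.exp (expInt x / 2) * (-(Real.exp (-x) / x) / 2))) = 0 := by
    set I1 := ∫ ξ in Set.Ioi (0:ℝ), ξ * (Real.exp (-x * ξ) * σ ξ) with hI1_def
    set F0 := ∫ ξ in Set.Ioi (0:ℝ), Real.exp (-x * ξ) * σ ξ with hF0_def
    have hI1 : I1 = (1 - Real.exp (-x)) / 2 * F0 / x := by
      rw [eq_div_iff hx.ne', mul_comm]
      exact hparts
    rw [hI1, ← hss]
    have hsne := hs0.ne'
    field_simp
    have hx2 : Real.sqrt x ^ 2 = x := by rw [sq]; exact hss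
    simp only [hx2]
    ring
  exact h0 ▸ hG'

lemma lapG_eq_sqrt_pi (σ : ℝ → ℝ)
    (hσ_nonpos : ∀ x ≤ (0 : ℝ), σ x = 0)
    (hσ_init : ∀ x : ℝ, 0 < x → x ≤ 1 → σ x = 1 / Real.sqrt x)
    (hσ_cont : ContinuousOn σ (Set.Ioi 0))
    (hσ_dde : ∀ x : ℝ, 1 < x → HasDerivAt σ (-(σ x / 2 + σ (x - 1) / 2) / x) x)
    (hσ_bdd : ∀ ξ : ℝ, 0 < ξ → 0 ≤ σ ξ ∧ σ ξ ≤ 1 / Real.sqrt ξ)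
    {x : ℝ} (hx : 0 < x) : lapG σ x = Real.sqrt π := by
  have hconst : ∀ b, x ≤ b → lapG σ b = lapG σ x := by
    intro b hb
    have h := constant_of_has_deriv_right_zero (f := lapG σ) (a := x) (b := b)
      (fun y hy => ((lapG_hasDerivAt σ hσ_nonpos hσ_init hσ_cont hσ_dde hσ_bdd
        (lt_of_lt_of_le hx hy.1)).continuousAt).continuousWithinAt)
      (fun y hy => (lapG_hasDerivAt σ hσ_nonpos hσ_init hσ_cont hσ_dde hσ_bdd
        (lt_of_lt_of_le hx hy.1)).hasDerivWithinAt)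
    exact h b (Set.right_mem_Icc.2 hb)
  have hX : Tendsto (fun y : ℝ => Real.exp (expInt y / 2)) atTop (𝓝 1) := by
    have h0 : Tendsto (fun a : ℝ => expInt a / 2) atTop (𝓝 0) := by
      simpa using expInt_tendsto_zero.div_const 2
    have h := (Real.continuous_exp.tendsto 0).comp h0
    simpa [Function.comp_def] using h
  have hlim : Tendsto (lapG σ) atTop (𝓝 (Real.sqrt π)) := by
    have h := (laplace_sqrt_tendsto σ hσ_nonpos hσ_init hσ_cont hσ_bdd).mul hX
    rw [mul_one] at h
    refine h.congr fun y => ?_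
    simp only [lapG]
    ring
  have hconst' : Tendsto (lapG σ) atTop (𝓝 (lapG σ x)) := by
    refine tendsto_const_nhds.congr' ?_
    filter_upwards [eventually_ge_atTop x] with b hb
    exact (hconst b hb).symm
  exact tendsto_nhds_unique hconst' hlim

/-- The one-sided Laplace transform of Watterson's function is
√(π/η)·exp(−E(η)/2) for η > 0. -/
theorem laplace_watterson
    (σ : ℝ → ℝ)
    (hσ_nonpos : ∀ x ≤ (0 : ℝ), σ x = 0)
    (hσ_init : ∀ x : ℝ, 0 < x → x ≤ 1 → σ x = 1 / Real.sqrt x)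
    (hσ_cont : ContinuousOn σ (Set.Ioi 0))
    (hσ_dde : ∀ x : ℝ, 1 < x → HasDerivAt σ (-(σ x / 2 + σ (x - 1) / 2) / x) x)
    (hσ_bdd : ∀ ξ : ℝ, 0 < ξ → 0 ≤ σ ξ ∧ σ ξ ≤ 1 / Real.sqrt ξ)
    (η : ℝ) (hη : 0 < η) :
    ∫ ξ in Set.Ioi (0 : ℝ), Real.exp (-η * ξ) * σ ξ =
      Real.sqrt (π / η) * Real.exp (-expInt η / 2) := by
  have h := lapG_eq_sqrt_pi σ hσ_nonpos hσ_init hσ_cont hσ_dde hσ_bdd hη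
  rw [lapG] at h
  set I := ∫ ξ in Set.Ioi (0:ℝ), Real.exp (-η * ξ) * σ ξ with hI
  have hs0 : 0 < Real.sqrt η := Real.sqrt_pos.2 hη
  have hX : Real.exp (expInt η / 2) ≠ 0 := Real.exp_ne_zero _
  have hdiv : Real.sqrt (π / η) = Real.sqrt π / Real.sqrt η := Real.sqrt_div pi_pos.le η
  have hexpneg : Real.exp (-expInt η / 2) = (Real.exp (expInt η / 2))⁻¹ := by
    rw [neg_div, Real.exp_neg]
  rw [hdiv, hexpneg]
  have hsne := hs0.ne'
  field_simp
  linear_combination h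
end
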